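/- Let P(z) = z² + z(E + iε − λ) + 1 with |E−λ| < 2, and let k ∈ (0,π) satisfy E = −2cos k + λ. Then the root ξ_ε of P inside the unit disc satisfies lim_{ε↘0} ξ_ε = e^{ik} and lim_{ε↗0} ξ_ε = e^{−ik}. -/

import Mathlib

open Filter Topology

lemma stmt15_aux (E lam k : ℝ) (hk : k ∈ Set.Ioo 0 Real.pi)
    (hE : E = -2 * Real.cos k + lam) (ε : ℝ) (hε : ε ≠ 0) (ξ : ℂ)
    (heq : ξ ^ 2 + ξ * ((E : ℂ) + ε * Complex.I - lam) + 1 = 0)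
    (habs : ‖ξ‖ < 1) :
    (0 < ε → ‖ξ - Complex.exp (Complex.I * k)‖ ≤ ε / Real.sin k) ∧
    (ε < 0 → ‖ξ - Complex.exp (-(Complex.I * k))‖ ≤ -ε / Real.sin k) := by
  have hs : 0 < Real.sin k := Real.sin_pos_of_pos_of_lt_pi hk.1 hk.2
  set a := Complex.exp (Complex.I * k) with ha_def
  set b := Complex.exp (-(Complex.I * k)) with hb_def
  have ha : a = (Real.cos k : ℂ) + (Real.sin k : ℂ) * Complex.I := by
    rw [ha_def, mul_comm, Complex.exp_mul_I, Complex.ofReal_cos, Complex.ofReal_sin]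
  have hb : b = (Real.cos k : ℂ) - (Real.sin k : ℂ) * Complex.I := by
    have : -(Complex.I * (k:ℂ)) = ((-k : ℝ) : ℂ) * Complex.I := by push_cast; ring
    rw [hb_def, this, Complex.exp_mul_I]
    push_cast
    rw [Complex.cos_neg, Complex.sin_neg, ← Complex.ofReal_cos, ← Complex.ofReal_sin]
    ring
  have hξ0 : ξ ≠ 0 := by
    intro h; rw [h] at heq; norm_num at heq
  set r := Complex.normSq ξ with hr_def
  have hr0 : 0 < r := Complex.normSq_pos.mpr hξ0
  have hr1 : r < 1 := by
    have := Complex.normSq_eq_norm_sq ξ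
    nlinarith [norm_nonneg ξ]
  have hconj : ((r : ℝ) : ℂ) = (starRingEnd ℂ) ξ * ξ := by
    rw [hr_def, mul_comm]; exact (Complex.mul_conj ξ).symm
  have h3 : ((r : ℝ) : ℂ) * ξ + ((r : ℝ) : ℂ) * ((E : ℂ) + ε * Complex.I - lam)
      + (starRingEnd ℂ) ξ = 0 := by
    linear_combination (starRingEnd ℂ) ξ * heq
      + (ξ + ((E : ℂ) + ε * Complex.I - lam)) * hconj
  have him : r * ξ.im + r * ε - ξ.im = 0 := by
    have := congrArg Complex.im h3
    simp at this; linarith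
  have hy : ξ.im * (1 - r) = r * ε := by linarith
  have hEc : (E : ℂ) = -2 * (Real.cos k : ℂ) + (lam : ℂ) := by
    exact_mod_cast congrArg (fun x : ℝ => (x : ℂ)) hE
  have hpyth : (Real.sin k : ℂ) ^ 2 + (Real.cos k : ℂ) ^ 2 = 1 := by
    exact_mod_cast Real.sin_sq_add_cos_sq k
  have hfac : (ξ - a) * (ξ - b) = -((ε : ℂ) * Complex.I) * ξ := by
    rw [ha, hb]
    linear_combination heq + hpyth - ξ * hEc - (Real.sin k : ℂ) ^ 2 * Complex.I_sq
  have habs_prod : ‖ξ - a‖ * ‖ξ - b‖ = |ε| * ‖ξ‖ := by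
    rw [← norm_mul, hfac]
    simp
  have haim : a.im = Real.sin k := by rw [ha]; simp [Complex.sin_ofReal_re]
  have hbim : b.im = -Real.sin k := by rw [hb]; simp [Complex.sin_ofReal_re]
  constructor
  · intro hεp
    have hy' : 0 < ξ.im := by nlinarith
    have hlow : Real.sin k ≤ ‖ξ - b‖ := by
      have h1 : |(ξ - b).im| ≤ ‖ξ - b‖ := Complex.abs_im_le_norm _
      have h2 : (ξ - b).im = ξ.im + Real.sin k := by simp [Complex.sub_im, hbim]
      rw [h2] at h1
      calc Real.sin k ≤ |ξ.im + Real.sin k| := by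
            rw [abs_of_pos (by linarith)]; linarith
        _ ≤ _ := h1
    rw [le_div_iff₀ hs]
    have : ‖ξ - a‖ * Real.sin k ≤ ‖ξ - a‖ * ‖ξ - b‖ :=
      mul_le_mul_of_nonneg_left hlow (norm_nonneg _)
    rw [habs_prod, abs_of_pos hεp] at this
    nlinarith [norm_nonneg ξ]
  · intro hεn
    have hy' : ξ.im < 0 := by nlinarith
    have hlow : Real.sin k ≤ ‖ξ - a‖ := by
      have h1 : |(ξ - a).im| ≤ ‖ξ - a‖ := Complex.abs_im_le_norm _
      have h2 : (ξ - a).im = ξ.im - Real.sin k := by simp [Complex.sub_im, haim]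
      rw [h2] at h1
      calc Real.sin k ≤ |ξ.im - Real.sin k| := by
            rw [abs_of_neg (by linarith)]; linarith
        _ ≤ _ := h1
    rw [le_div_iff₀ hs]
    have h6 : ‖ξ - b‖ * ‖ξ - a‖ ≤ -ε := by
      rw [mul_comm, habs_prod, abs_of_neg hεn]
      nlinarith [norm_nonneg ξ]
    nlinarith [norm_nonneg (ξ - b)]

/-- For |E−λ| < 2 with E = −2cos k + λ, k ∈ (0,π), the root of
    P(z) = z² + z(E + iε − λ) + 1 inside the unit disc converges to e^{ik} as ε ↘ 0
    and to e^{−ik} as ε ↗ 0. -/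
theorem stmt15 (E lam k : ℝ) (hlt : |E - lam| < 2) (hk : k ∈ Set.Ioo 0 Real.pi)
    (hE : E = -2 * Real.cos k + lam)
    (ξf : ℝ → ℂ)
    (hroot : ∀ ε : ℝ, ε ≠ 0 →
      (ξf ε) ^ 2 + (ξf ε) * ((E : ℂ) + ε * Complex.I - lam) + 1 = 0 ∧
      ‖ξf ε‖ < 1) :
    Tendsto ξf (𝓝[>] (0 : ℝ)) (𝓝 (Complex.exp (Complex.I * k))) ∧
    Tendsto ξf (𝓝[<] (0 : ℝ)) (𝓝 (Complex.exp (-(Complex.I * k)))) := by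
  have hs : 0 < Real.sin k := Real.sin_pos_of_pos_of_lt_pi hk.1 hk.2
  constructor
  · rw [tendsto_iff_dist_tendsto_zero]
    apply squeeze_zero' (g := fun ε : ℝ => ε / Real.sin k)
    · exact Eventually.of_forall fun _ => dist_nonneg
    · filter_upwards [eventually_mem_nhdsWithin] with ε (hε : ε ∈ Set.Ioi (0:ℝ))
      have hε' : (0:ℝ) < ε := hε
      obtain ⟨heq, habs⟩ := hroot ε (ne_of_gt hε')
      have := (stmt15_aux E lam k hk hE ε (ne_of_gt hε') (ξf ε) heq habs).1 hε'
      simpa [Complex.dist_eq] using this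
    · have : Tendsto (fun ε : ℝ => ε / Real.sin k) (𝓝 0) (𝓝 (0 / Real.sin k)) :=
        tendsto_id.div_const _
      simpa using this.mono_left nhdsWithin_le_nhds
  · rw [tendsto_iff_dist_tendsto_zero]
    apply squeeze_zero' (g := fun ε : ℝ => -ε / Real.sin k)
    · exact Eventually.of_forall fun _ => dist_nonneg
    · filter_upwards [eventually_mem_nhdsWithin] with ε (hε : ε ∈ Set.Iio (0:ℝ))
      have hε' : ε < 0 := hε
      obtain ⟨heq, habs⟩ := hroot ε (ne_of_lt hε')
      have := (stmt15_aux E lam k hk hE ε (ne_of_lt hε') (ξf ε) heq habs).2 hε'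
      simpa [Complex.dist_eq] using this
    · have : Tendsto (fun ε : ℝ => -ε / Real.sin k) (𝓝 0) (𝓝 (-0 / Real.sin k)) :=
        (tendsto_id.neg).div_const _
      simpa using this.mono_left nhdsWithin_le_nhds
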